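/- The Shapley-based contribution function ctrb^s satisfies the quantitative contribution existence principle with respect to each of the QE, DFQuAD, SD-DFQuAD, EB, and EBT semantics: for every acyclic QBAG G and every argument a ∈ A, Σ_{x ∈ A∖{a}} ctrb^s_{G,a}(x) = σ_G(a) − τ(a). -/

import Mathlib

open Finset

/-- A quantitative bipolar argumentation graph (QBAG): a finite set of arguments,
an initial strength function, and attack and support relations. -/
structure QBAG where
  args : Finset ℕ
  tau : ℕ → ℝ
  att : Finset (ℕ × ℕ)
  supp : Finset (ℕ × ℕ)

namespace QBAG

/-- The edge relation of the underlying directed graph (attack or support). -/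
def edge (G : QBAG) (x y : ℕ) : Prop := (x, y) ∈ G.att ∨ (x, y) ∈ G.supp

/-- Well-formedness: edges live on the arguments, attack and support are disjoint,
and initial strengths lie in [0,1]. -/
def WF (G : QBAG) : Prop :=
  (∀ p ∈ G.att, p.1 ∈ G.args ∧ p.2 ∈ G.args) ∧
  (∀ p ∈ G.supp, p.1 ∈ G.args ∧ p.2 ∈ G.args) ∧
  Disjoint G.att G.supp ∧
  (∀ a ∈ G.args, G.tau a ∈ Set.Icc (0 : ℝ) 1)

/-- Acyclicity of the directed graph (A, Att ∪ Supp). -/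
def Acyclic (G : QBAG) : Prop := ∀ x, ¬ Relation.TransGen G.edge x x

/-- Direct attackers of an argument. -/
def attackers (G : QBAG) (a : ℕ) : Finset ℕ :=
  (G.att.filter (fun p => p.2 = a)).image Prod.fst

/-- Direct supporters of an argument. -/
def supporters (G : QBAG) (a : ℕ) : Finset ℕ :=
  (G.supp.filter (fun p => p.2 = a)).image Prod.fst

/-- Restriction G↓S of a QBAG to a subset S of the arguments. -/
def restrict (G : QBAG) (S : Finset ℕ) : QBAG where
  args := G.args ∩ S
  tau := G.tau
  att := G.att.filter (fun p => p.1 ∈ S ∧ p.2 ∈ S)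
  supp := G.supp.filter (fun p => p.1 ∈ S ∧ p.2 ∈ S)

/-- G⁻: the QBAG G with every attack and support edge pointing into x removed. -/
def dropInto (G : QBAG) (x : ℕ) : QBAG where
  args := G.args
  tau := G.tau
  att := G.att.filter (fun p => p.2 ≠ x)
  supp := G.supp.filter (fun p => p.2 ≠ x)

/-- G[x←ε]: the QBAG G with the initial strength of x replaced by ε. -/
def setTau (G : QBAG) (x : ℕ) (ε : ℝ) : QBAG where
  args := G.args
  tau := Function.update G.tau x ε
  att := G.att
  supp := G.supp

end QBAG

noncomputable section

/-- Sum aggregation. -/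
def sumAgg (G : QBAG) (s : ℕ → ℝ) (a : ℕ) : ℝ :=
  (∑ y ∈ G.supporters a, s y) - (∑ y ∈ G.attackers a, s y)

/-- Product aggregation. -/
def prodAgg (G : QBAG) (s : ℕ → ℝ) (a : ℕ) : ℝ :=
  (∏ y ∈ G.attackers a, (1 - s y)) - (∏ y ∈ G.supporters a, (1 - s y))

/-- Top aggregation. -/
def topAgg (G : QBAG) (s : ℕ → ℝ) (a : ℕ) : ℝ :=
  (G.supporters a).fold max 0 s - (G.attackers a).fold max 0 s

/-- h for the 2-Max(1) influence function. -/
def h2 (x : ℝ) : ℝ := max 0 x ^ 2 / (1 + max 0 x ^ 2)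

/-- h for the 1-Max(1) influence function. -/
def h1 (x : ℝ) : ℝ := max 0 x / (1 + max 0 x)

/-- 2-Max(1) influence function (used by QE). -/
def iotaQE (w s : ℝ) : ℝ := w - w * h2 (-s) + (1 - w) * h2 s

/-- Linear(1) influence function (used by DFQuAD). -/
def iotaLin (w s : ℝ) : ℝ := w - w * max 0 (-s) + (1 - w) * max 0 s

/-- 1-Max(1) influence function (used by SD-DFQuAD). -/
def iotaSD (w s : ℝ) : ℝ := w - w * h1 (-s) + (1 - w) * h1 s

/-- Euler-based influence function (used by EB and EBT). -/
def iotaEB (w s : ℝ) : ℝ := 1 - (1 - w ^ 2) / (1 + w * Real.exp s)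

/-- σ is a modular semantics with aggregation `agg` and influence `iota`:
on every well-formed acyclic QBAG the final strengths satisfy the defining equations. -/
def IsSemantics (agg : QBAG → (ℕ → ℝ) → ℕ → ℝ) (iota : ℝ → ℝ → ℝ)
    (σ : QBAG → ℕ → ℝ) : Prop :=
  ∀ G : QBAG, G.WF → G.Acyclic → ∀ a ∈ G.args, σ G a = iota (G.tau a) (agg G (σ G) a)

/-- QE semantics. -/
def IsQE (σ : QBAG → ℕ → ℝ) : Prop := IsSemantics sumAgg iotaQE σ

/-- DFQuAD semantics. -/
def IsDF (σ : QBAG → ℕ → ℝ) : Prop := IsSemantics prodAgg iotaLin σ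

/-- SD-DFQuAD semantics. -/
def IsSD (σ : QBAG → ℕ → ℝ) : Prop := IsSemantics prodAgg iotaSD σ

/-- EB semantics. -/
def IsEB (σ : QBAG → ℕ → ℝ) : Prop := IsSemantics sumAgg iotaEB σ

/-- EBT semantics. -/
def IsEBT (σ : QBAG → ℕ → ℝ) : Prop := IsSemantics topAgg iotaEB σ

/-- A gradual semantics assigns final strengths in [0,1] on acyclic QBAGs. -/
def IsGradualSemantics (σ : QBAG → ℕ → ℝ) : Prop :=
  ∀ G : QBAG, G.WF → G.Acyclic → ∀ a ∈ G.args, σ G a ∈ Set.Icc (0 : ℝ) 1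

/-- Removal-based contribution: ctrb^r_{G,a}(x) = σ_G(a) − σ_{G↓(A∖{x})}(a). -/
def ctrbR (σ : QBAG → ℕ → ℝ) (G : QBAG) (a x : ℕ) : ℝ :=
  σ G a - σ (G.restrict (G.args.erase x)) a

/-- Intrinsic-removal contribution: ctrb^{ri}_{G,a}(x) = σ_{G⁻}(a) − σ_{G↓(A∖{x})}(a). -/
def ctrbRI (σ : QBAG → ℕ → ℝ) (G : QBAG) (a x : ℕ) : ℝ :=
  σ (G.dropInto x) a - σ (G.restrict (G.args.erase x)) a

/-- Shapley-based contribution. -/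
def ctrbS (σ : QBAG → ℕ → ℝ) (G : QBAG) (a x : ℕ) : ℝ :=
  ∑ X ∈ ((G.args.erase a).erase x).powerset,
    ((X.card.factorial : ℝ) * ((G.args.erase a).card - X.card - 1).factorial /
      (G.args.erase a).card.factorial) *
    (σ (G.restrict (G.args \ X)) a - σ (G.restrict (G.args \ insert x X)) a)

/-- Gradient-based contribution: the derivative at ε = τ(x) (within [0,1]) of
the map ε ↦ σ_{G[x←ε]}(a). -/
def ctrbG (σ : QBAG → ℕ → ℝ) (G : QBAG) (a x : ℕ) : ℝ :=
  derivWithin (fun ε => σ (G.setTau x ε) a) (Set.Icc (0 : ℝ) 1) (G.tau x)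

/-- The contribution existence principle. -/
def ContributionExistence (ctrb : QBAG → ℕ → ℕ → ℝ) (σ : QBAG → ℕ → ℝ) : Prop :=
  ∀ G : QBAG, G.WF → G.Acyclic → ∀ a ∈ G.args,
    σ G a ≠ G.tau a → ∃ x ∈ G.args, x ≠ a ∧ ctrb G a x ≠ 0

/-- The quantitative contribution existence principle. -/
def QuantContributionExistence (ctrb : QBAG → ℕ → ℕ → ℝ) (σ : QBAG → ℕ → ℝ) : Prop :=
  ∀ G : QBAG, G.WF → G.Acyclic → ∀ a ∈ G.args,
    ∑ x ∈ G.args.erase a, ctrb G a x = σ G a - G.tau a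

/-- The strong faithfulness principle. -/
def StrongFaithfulness (ctrb : QBAG → ℕ → ℕ → ℝ) (σ : QBAG → ℕ → ℝ) : Prop :=
  ∀ G : QBAG, G.WF → G.Acyclic → ∀ a ∈ G.args, ∀ x ∈ G.args,
    ∀ ε ∈ Set.Icc (0 : ℝ) 1,
      (ctrb G a x < 0 →
        (ε < G.tau x → σ G a < σ (G.setTau x ε) a) ∧
        (ε > G.tau x → σ G a > σ (G.setTau x ε) a)) ∧
      (ctrb G a x = 0 → σ G a = σ (G.setTau x ε) a) ∧
      (ctrb G a x > 0 →
        (ε < G.tau x → σ G a > σ (G.setTau x ε) a) ∧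
        (ε > G.tau x → σ G a < σ (G.setTau x ε) a))

/-- The local faithfulness principle. -/
def LocalFaithfulness (ctrb : QBAG → ℕ → ℕ → ℝ) (σ : QBAG → ℕ → ℝ) : Prop :=
  ∀ G : QBAG, G.WF → G.Acyclic → ∀ a ∈ G.args, ∀ x ∈ G.args,
    ∃ δ > 0, ∀ ε ∈ Set.Icc (G.tau x - δ) (G.tau x + δ) ∩ Set.Icc (0 : ℝ) 1,
      (ctrb G a x < 0 →
        (ε < G.tau x → σ G a < σ (G.setTau x ε) a) ∧
        (ε > G.tau x → σ G a > σ (G.setTau x ε) a)) ∧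
      (ctrb G a x > 0 →
        (ε < G.tau x → σ G a > σ (G.setTau x ε) a) ∧
        (ε > G.tau x → σ G a < σ (G.setTau x ε) a))

/-- The quantitative local faithfulness principle: the map ε ↦ σ_{G[x←ε]}(a) is
differentiable (within [0,1]) at τ(x) with derivative ctrb_{G,a}(x); equivalently
σ_{G[x←τ(x)+ε]}(a) = σ_G(a) + ε·ctrb_{G,a}(x) + e(ε) with e(ε)/ε → 0. -/
def QuantLocalFaithfulness (ctrb : QBAG → ℕ → ℕ → ℝ) (σ : QBAG → ℕ → ℝ) : Prop :=
  ∀ G : QBAG, G.WF → G.Acyclic → ∀ a ∈ G.args, ∀ x ∈ G.args,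
    HasDerivWithinAt (fun ε => σ (G.setTau x ε) a) (ctrb G a x)
      (Set.Icc (0 : ℝ) 1) (G.tau x)

/-- The counterfactuality principle. -/
def Counterfactuality (ctrb : QBAG → ℕ → ℕ → ℝ) (σ : QBAG → ℕ → ℝ) : Prop :=
  ∀ G : QBAG, G.WF → G.Acyclic → ∀ a ∈ G.args, ∀ x ∈ G.args,
    (ctrb G a x < 0 → σ G a < σ (G.restrict (G.args.erase x)) a) ∧
    (ctrb G a x = 0 → σ G a = σ (G.restrict (G.args.erase x)) a) ∧
    (ctrb G a x > 0 → σ G a > σ (G.restrict (G.args.erase x)) a)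

/-- The quantitative counterfactuality principle. -/
def QuantCounterfactuality (ctrb : QBAG → ℕ → ℕ → ℝ) (σ : QBAG → ℕ → ℝ) : Prop :=
  ∀ G : QBAG, G.WF → G.Acyclic → ∀ a ∈ G.args, ∀ x ∈ G.args,
    ctrb G a x = σ G a - σ (G.restrict (G.args.erase x)) a

end


section AuxShapley

open Finset

private lemma shapley_sum_aux (N : Finset ℕ) (g : Finset ℕ → ℝ) :
    ∑ x ∈ N, ∑ X ∈ (N.erase x).powerset,
      ((X.card.factorial : ℝ) * ((N.card - X.card - 1).factorial) / N.card.factorial)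
        * (g X - g (insert x X))
    = g ∅ - g N := by
  by_cases hN : N = ∅
  · subst hN; simp
  have hn0 : 0 < N.card := Finset.card_pos.mpr (Finset.nonempty_iff_ne_empty.mpr hN)
  set n := N.card with hn
  have hnfac : ((n.factorial : ℝ)) ≠ 0 := Nat.cast_ne_zero.mpr n.factorial_ne_zero
  have hsplit : ∀ x ∈ N, ∑ X ∈ (N.erase x).powerset,
      ((X.card.factorial : ℝ) * ((n - X.card - 1).factorial) / n.factorial) * (g X - g (insert x X))
      = (∑ X ∈ (N.erase x).powerset,
          ((X.card.factorial : ℝ) * ((n - X.card - 1).factorial) / n.factorial) * g X)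
        - ∑ X ∈ (N.erase x).powerset,
          ((X.card.factorial : ℝ) * ((n - X.card - 1).factorial) / n.factorial) * g (insert x X) := by
    intro x _
    rw [← Finset.sum_sub_distrib]
    exact Finset.sum_congr rfl fun X _ => by ring
  rw [Finset.sum_congr rfl hsplit, Finset.sum_sub_distrib]
  have hcomm : ∀ x X, x ∈ N ∧ X ∈ (N.erase x).powerset ↔ x ∈ N \ X ∧ X ∈ N.powerset := by
    intro x X
    simp only [Finset.mem_powerset, Finset.subset_erase, Finset.mem_sdiff]
    tauto
  have hA : (∑ x ∈ N, ∑ X ∈ (N.erase x).powerset,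
        ((X.card.factorial : ℝ) * ((n - X.card - 1).factorial) / n.factorial) * g X)
      = ∑ X ∈ N.powerset, ((N \ X).card : ℝ) *
          (((X.card.factorial : ℝ) * ((n - X.card - 1).factorial) / n.factorial) * g X) := by
    rw [Finset.sum_comm' hcomm]
    exact Finset.sum_congr rfl fun X _ => by rw [Finset.sum_const, nsmul_eq_mul]
  have hB : (∑ x ∈ N, ∑ X ∈ (N.erase x).powerset,
        ((X.card.factorial : ℝ) * ((n - X.card - 1).factorial) / n.factorial) * g (insert x X))
      = ∑ Y ∈ N.powerset, (Y.card : ℝ) *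
          ((((Y.card - 1).factorial : ℝ) * ((n - (Y.card - 1) - 1).factorial) / n.factorial) * g Y) := by
    have hre : ∀ x ∈ N, ∑ X ∈ (N.erase x).powerset,
        ((X.card.factorial : ℝ) * ((n - X.card - 1).factorial) / n.factorial) * g (insert x X)
        = ∑ Y ∈ N.powerset.filter (fun Y => x ∈ Y),
            (((Y.card - 1).factorial : ℝ) * ((n - (Y.card - 1) - 1).factorial) / n.factorial) * g Y := by
      intro x hx
      refine Finset.sum_bij' (fun X _ => insert x X) (fun Y _ => Y.erase x) ?_ ?_ ?_ ?_ ?_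
      · intro X hX
        rw [Finset.mem_powerset, Finset.subset_erase] at hX
        simp only [Finset.mem_filter, Finset.mem_powerset]
        exact ⟨Finset.insert_subset hx hX.1, Finset.mem_insert_self x X⟩
      · intro Y hY
        rw [Finset.mem_filter, Finset.mem_powerset] at hY
        rw [Finset.mem_powerset]
        exact Finset.erase_subset_erase x hY.1
      · intro X hX
        rw [Finset.mem_powerset, Finset.subset_erase] at hX
        exact Finset.erase_insert hX.2
      · intro Y hY
        rw [Finset.mem_filter] at hY
        exact Finset.insert_erase hY.2
      · intro X hX
        rw [Finset.mem_powerset, Finset.subset_erase] at hX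
        rw [Finset.card_insert_of_notMem hX.2]
        simp
    rw [Finset.sum_congr rfl hre]
    have hcomm2 : ∀ x Y, x ∈ N ∧ Y ∈ N.powerset.filter (fun Y => x ∈ Y) ↔ x ∈ Y ∧ Y ∈ N.powerset := by
      intro x Y
      simp only [Finset.mem_filter, Finset.mem_powerset]
      constructor
      · rintro ⟨_, h1, h2⟩; exact ⟨h2, h1⟩
      · rintro ⟨h1, h2⟩; exact ⟨h2 h1, h2, h1⟩
    rw [Finset.sum_comm' hcomm2]
    exact Finset.sum_congr rfl fun Y _ => by rw [Finset.sum_const, nsmul_eq_mul]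
  rw [hA, hB, ← Finset.sum_sub_distrib]
  set F : Finset ℕ → ℝ := fun Y =>
    ((N \ Y).card : ℝ) * (((Y.card.factorial : ℝ) * ((n - Y.card - 1).factorial) / n.factorial) * g Y)
    - (Y.card : ℝ) * ((((Y.card - 1).factorial : ℝ) * ((n - (Y.card - 1) - 1).factorial) / n.factorial) * g Y)
    with hF
  have hmem0 : (∅ : Finset ℕ) ∈ N.powerset := Finset.empty_mem_powerset N
  have hmemN : N ∈ (N.powerset.erase ∅) :=
    Finset.mem_erase.mpr ⟨hN, Finset.mem_powerset_self N⟩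
  rw [← Finset.add_sum_erase _ F hmem0, ← Finset.add_sum_erase _ F hmemN]
  have hF0 : F ∅ = g ∅ := by
    have hfac : (n : ℝ) * (n - 1).factorial = n.factorial := by
      exact_mod_cast Nat.mul_factorial_pred hn0.ne'
    simp only [hF, Finset.sdiff_empty, Finset.card_empty, Nat.cast_zero, zero_mul, sub_zero,
      Nat.factorial_zero, Nat.cast_one, one_mul, Nat.sub_zero]
    field_simp
    linear_combination g ∅ * hfac
  have hFN : F N = - g N := by
    have hfac : (n : ℝ) * (n - 1).factorial = n.factorial := by
      exact_mod_cast Nat.mul_factorial_pred hn0.ne'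
    have h1 : n - (n - 1) - 1 = 0 := by omega
    simp only [hF, Finset.sdiff_self, Finset.card_empty, Nat.cast_zero, zero_mul, h1,
      Nat.factorial_zero, Nat.cast_one, mul_one, zero_sub, ← hn]
    field_simp
    linear_combination (-g N) * hfac
  have hrest : ∑ Y ∈ ((N.powerset.erase ∅).erase N), F Y = 0 := by
    refine Finset.sum_eq_zero fun Y hY => ?_
    rw [Finset.mem_erase, Finset.mem_erase, Finset.mem_powerset] at hY
    obtain ⟨hYN, hY0, hYsub⟩ := hY
    set k := Y.card with hk
    have hk0 : 0 < k := Finset.card_pos.mpr (Finset.nonempty_iff_ne_empty.mpr hY0)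
    have hkn : k < n := Finset.card_lt_card (HasSubset.Subset.ssubset_of_ne hYsub hYN)
    have hcard : (N \ Y).card = n - k := Finset.card_sdiff_of_subset hYsub
    have h1 : ((n - k : ℕ) : ℝ) * ((n - k - 1).factorial : ℝ) = ((n - k).factorial : ℝ) := by
      exact_mod_cast Nat.mul_factorial_pred (by omega)
    have h2 : (k : ℝ) * ((k - 1).factorial : ℝ) = (k.factorial : ℝ) := by
      exact_mod_cast Nat.mul_factorial_pred hk0.ne'
    have h3 : n - (k - 1) - 1 = n - k := by omega
    rw [hF]
    simp only [hcard, h3, ← hk]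
    field_simp
    linear_combination (g Y * (k.factorial : ℝ)) * h1 - (g Y * ((n-k).factorial : ℝ)) * h2
  rw [hF0, hFN, hrest]
  ring

private lemma aux_restrict_args (G : QBAG) (S : Finset ℕ) : (G.restrict S).args = G.args ∩ S := rfl
private lemma aux_restrict_tau (G : QBAG) (S : Finset ℕ) : (G.restrict S).tau = G.tau := rfl
private lemma aux_restrict_att (G : QBAG) (S : Finset ℕ) :
    (G.restrict S).att = G.att.filter (fun p => p.1 ∈ S ∧ p.2 ∈ S) := rfl
private lemma aux_restrict_supp (G : QBAG) (S : Finset ℕ) :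
    (G.restrict S).supp = G.supp.filter (fun p => p.1 ∈ S ∧ p.2 ∈ S) := rfl

private lemma aux_restrict_WF (G : QBAG) (hG : G.WF) (S : Finset ℕ) : (G.restrict S).WF := by
  obtain ⟨h1, h2, h3, h4⟩ := hG
  refine ⟨?_, ?_, ?_, ?_⟩
  · intro p hp
    rw [aux_restrict_att, Finset.mem_filter] at hp
    rw [aux_restrict_args]
    simp only [Finset.mem_inter]
    exact ⟨⟨(h1 p hp.1).1, hp.2.1⟩, (h1 p hp.1).2, hp.2.2⟩
  · intro p hp
    rw [aux_restrict_supp, Finset.mem_filter] at hp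
    rw [aux_restrict_args]
    simp only [Finset.mem_inter]
    exact ⟨⟨(h2 p hp.1).1, hp.2.1⟩, (h2 p hp.1).2, hp.2.2⟩
  · rw [aux_restrict_att, aux_restrict_supp]
    exact Finset.disjoint_filter_filter h3
  · intro b hb
    rw [aux_restrict_args, Finset.mem_inter] at hb
    rw [aux_restrict_tau]
    exact h4 b hb.1

private lemma aux_restrict_acyclic (G : QBAG) (hG : G.Acyclic) (S : Finset ℕ) :
    (G.restrict S).Acyclic := by
  intro x hx
  refine hG x (Relation.TransGen.mono (p := G.edge) ?_ x x hx)
  intro u v huv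
  rcases huv with h | h
  · rw [aux_restrict_att, Finset.mem_filter] at h; exact Or.inl h.1
  · rw [aux_restrict_supp, Finset.mem_filter] at h; exact Or.inr h.1

private lemma aux_restrict_self (G : QBAG) (hG : G.WF) : G.restrict G.args = G := by
  obtain ⟨h1, h2, -, -⟩ := hG
  obtain ⟨A, t, att, supp⟩ := G
  simp only [QBAG.restrict, QBAG.mk.injEq]
  refine ⟨Finset.inter_self A, trivial, ?_, ?_⟩
  · exact Finset.filter_true_of_mem (fun p hp => h1 p hp)
  · exact Finset.filter_true_of_mem (fun p hp => h2 p hp)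

private lemma aux_attackers_restrict_empty (G : QBAG) (hAc : G.Acyclic) (a : ℕ) :
    (G.restrict (G.args \ G.args.erase a)).attackers a = ∅ := by
  rw [Finset.eq_empty_iff_forall_notMem]
  intro y hy
  rw [QBAG.attackers, Finset.mem_image] at hy
  obtain ⟨p, hp, rfl⟩ := hy
  rw [Finset.mem_filter, aux_restrict_att, Finset.mem_filter] at hp
  obtain ⟨⟨hpa, hp1S, hp2S⟩, hp2⟩ := hp
  rw [Finset.mem_sdiff] at hp1S
  have hpe : p.1 = a := by
    by_contra hne
    exact hp1S.2 (Finset.mem_erase.mpr ⟨hne, hp1S.1⟩)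
  have haa : (a, a) ∈ G.att := by
    have hpp : p = (a, a) := Prod.ext hpe hp2
    rwa [hpp] at hpa
  exact hAc a (Relation.TransGen.single (Or.inl haa))

private lemma aux_supporters_restrict_empty (G : QBAG) (hAc : G.Acyclic) (a : ℕ) :
    (G.restrict (G.args \ G.args.erase a)).supporters a = ∅ := by
  rw [Finset.eq_empty_iff_forall_notMem]
  intro y hy
  rw [QBAG.supporters, Finset.mem_image] at hy
  obtain ⟨p, hp, rfl⟩ := hy
  rw [Finset.mem_filter, aux_restrict_supp, Finset.mem_filter] at hp
  obtain ⟨⟨hpa, hp1S, hp2S⟩, hp2⟩ := hp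
  rw [Finset.mem_sdiff] at hp1S
  have hpe : p.1 = a := by
    by_contra hne
    exact hp1S.2 (Finset.mem_erase.mpr ⟨hne, hp1S.1⟩)
  have haa : (a, a) ∈ G.supp := by
    have hpp : p = (a, a) := Prod.ext hpe hp2
    rwa [hpp] at hpa
  exact hAc a (Relation.TransGen.single (Or.inr haa))

private lemma aux_iotaQE_zero (w : ℝ) : iotaQE w 0 = w := by
  simp [iotaQE, h2]

private lemma aux_iotaLin_zero (w : ℝ) : iotaLin w 0 = w := by
  simp [iotaLin]

private lemma aux_iotaSD_zero (w : ℝ) : iotaSD w 0 = w := by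
  simp [iotaSD, h1]

private lemma aux_iotaEB_zero (w : ℝ) (hw : 0 ≤ w) : iotaEB w 0 = w := by
  have h : (1 : ℝ) + w ≠ 0 := by positivity
  rw [iotaEB, Real.exp_zero, mul_one]
  field_simp
  ring

/-- Stability: the restriction of G to just {a} assigns a its initial strength. -/
private lemma aux_sigma_restrict_singleton (σ : QBAG → ℕ → ℝ)
    (hσ : IsQE σ ∨ IsDF σ ∨ IsSD σ ∨ IsEB σ ∨ IsEBT σ)
    (G : QBAG) (hWF : G.WF) (hAc : G.Acyclic) (a : ℕ) (ha : a ∈ G.args) :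
    σ (G.restrict (G.args \ G.args.erase a)) a = G.tau a := by
  set G' := G.restrict (G.args \ G.args.erase a) with hG'
  have hWF' : G'.WF := aux_restrict_WF G hWF _
  have hAc' : G'.Acyclic := aux_restrict_acyclic G hAc _
  have ha' : a ∈ G'.args := by
    rw [hG', aux_restrict_args, Finset.mem_inter, Finset.mem_sdiff]
    exact ⟨ha, ha, Finset.notMem_erase a _⟩
  have htau : G'.tau a = G.tau a := rfl
  have hatt : G'.attackers a = ∅ := aux_attackers_restrict_empty G hAc a
  have hsupp : G'.supporters a = ∅ := aux_supporters_restrict_empty G hAc a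
  have hτ0 : 0 ≤ G.tau a := (hWF.2.2.2 a ha).1
  rcases hσ with h | h | h | h | h
  · have heq := h G' hWF' hAc' a ha'
    rw [heq, htau]
    have hagg : sumAgg G' (σ G') a = 0 := by
      rw [sumAgg, hatt, hsupp]; simp
    rw [hagg, aux_iotaQE_zero]
  · have heq := h G' hWF' hAc' a ha'
    rw [heq, htau]
    have hagg : prodAgg G' (σ G') a = 0 := by
      rw [prodAgg, hatt, hsupp]; simp
    rw [hagg, aux_iotaLin_zero]
  · have heq := h G' hWF' hAc' a ha'
    rw [heq, htau]
    have hagg : prodAgg G' (σ G') a = 0 := by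
      rw [prodAgg, hatt, hsupp]; simp
    rw [hagg, aux_iotaSD_zero]
  · have heq := h G' hWF' hAc' a ha'
    rw [heq, htau]
    have hagg : sumAgg G' (σ G') a = 0 := by
      rw [sumAgg, hatt, hsupp]; simp
    rw [hagg, aux_iotaEB_zero _ hτ0]
  · have heq := h G' hWF' hAc' a ha'
    rw [heq, htau]
    have hagg : topAgg G' (σ G') a = 0 := by
      rw [topAgg, hatt, hsupp]; simp
    rw [hagg, aux_iotaEB_zero _ hτ0]

end AuxShapley

/-- The Shapley-based contribution function satisfies quantitative
contribution existence w.r.t. each of the QE, DFQuAD, SD-DFQuAD, EB, and EBT semantics. -/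
theorem ctrbS_satisfies_quant_contribution_existence
    (σ : QBAG → ℕ → ℝ) (hσ : IsQE σ ∨ IsDF σ ∨ IsSD σ ∨ IsEB σ ∨ IsEBT σ) :
    QuantContributionExistence (ctrbS σ) σ := by
  intro G hWF hAc a ha
  have key : (∑ x ∈ G.args.erase a, ctrbS σ G a x)
      = σ (G.restrict (G.args \ ∅)) a - σ (G.restrict (G.args \ G.args.erase a)) a :=
    shapley_sum_aux (G.args.erase a) (fun X => σ (G.restrict (G.args \ X)) a)
  rw [key, Finset.sdiff_empty, aux_restrict_self G hWF,
    aux_sigma_restrict_singleton σ hσ G hWF hAc a ha]
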